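/- Suppose (𝒳, S, γ, (Λ_a)_{a∈A}) is a spectral decomposition system for a Euclidean space 𝔥 with {Λ_a : a ∈ A} closed in L(𝒳,𝔥). Let D be a nonempty S-invariant subset of 𝒳 and let X ∈ 𝔥. Then N_L(X; γ⁻¹(D)) = {Λ_a y : y ∈ N_L(γ(X); D), a ∈ A_X}. -/
import Mathlib


open Filter Topology Set Metric
open scoped RealInnerProductSpace

noncomputable section

/-- A spectral decomposition system `(𝒳, S, γ, (Λ_a)_{a ∈ A})` for the space `H`:
`S` acts on `𝒳` by linear isometries (via `act`), `γ : H → 𝒳` is the spectral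
mapping, each `Λ a : 𝒳 → H` is a linear isometry, and the axioms [A], [B], [C] hold,
with `τ` the `S`-invariant ordering mapping of axiom [A]. -/
structure SDS (𝒳 H : Type*) [NormedAddCommGroup 𝒳] [InnerProductSpace ℝ 𝒳]
    [NormedAddCommGroup H] [InnerProductSpace ℝ H]
    (S : Type*) [Group S] (A : Type*) where
  act : S →* (𝒳 ≃ₗᵢ[ℝ] 𝒳)
  γ : H → 𝒳
  Λ : A → 𝒳 →ₗᵢ[ℝ] H
  τ : 𝒳 → 𝒳
  τ_inv : ∀ (s : S) (x : 𝒳), τ (act s x) = τ x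
  τ_orbit : ∀ x : 𝒳, ∃ s : S, τ x = act s x
  γΛ : ∀ (a : A) (x : 𝒳), γ (Λ a x) = τ x
  decomp : ∀ X : H, ∃ a : A, X = Λ a (γ X)
  inner_le : ∀ X Y : H, ⟪X, Y⟫ ≤ ⟪γ X, γ Y⟫

variable {𝒳 H S A : Type*} [NormedAddCommGroup 𝒳] [InnerProductSpace ℝ 𝒳]
    [NormedAddCommGroup H] [InnerProductSpace ℝ H] [Group S]

/-- The set `{Λ_a : a ∈ A}`, regarded as a subset of the space `L(𝒳, H)` of
continuous linear maps with the operator norm. -/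
def SDS.LambdaSet (𝔖 : SDS 𝒳 H S A) : Set (𝒳 →L[ℝ] H) :=
  {L | ∃ a : A, L = (𝔖.Λ a).toContinuousLinearMap}

/-- `A_X = {a ∈ A : X = Λ_a (γ X)}`. -/
def SDS.AX (𝔖 : SDS 𝒳 H S A) (X : H) : Set A := {a | X = 𝔖.Λ a (𝔖.γ X)}

/-- The Fréchet normal cone to `D` at `x`: empty if `x ∉ D`, and otherwise the set of
`y` with `limsup_{z → x, z ∈ D \ {x}} ⟨z - x, y⟩ / ‖z - x‖ ≤ 0`, expressed in ε-δ form. -/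
def fNormal {E : Type*} [NormedAddCommGroup E] [InnerProductSpace ℝ E]
    (D : Set E) (x : E) : Set E :=
  {y | x ∈ D ∧ ∀ ε : ℝ, 0 < ε → ∃ δ : ℝ, 0 < δ ∧
    ∀ z ∈ D, ‖z - x‖ < δ → ⟪z - x, y⟫ ≤ ε * ‖z - x‖}

/-- The limiting normal cone to `D` at `x`: the set of limits `y` of sequences
`y_n ∈ N_F(x_n; D)` with `x_n → x`; empty if `x ∉ D`. -/
def lNormal {E : Type*} [NormedAddCommGroup E] [InnerProductSpace ℝ E]
    (D : Set E) (x : E) : Set E :=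
  {y | x ∈ D ∧ ∃ xn yn : ℕ → E, (∀ n, yn n ∈ fNormal D (xn n)) ∧
    Tendsto xn atTop (𝓝 x) ∧ Tendsto yn atTop (𝓝 y)}

namespace SDS
variable (𝔖 : SDS 𝒳 H S A)

lemma norm_γ (X : H) : ‖𝔖.γ X‖ = ‖X‖ := by
  obtain ⟨a, ha⟩ := 𝔖.decomp X
  conv_rhs => rw [ha]
  rw [(𝔖.Λ a).norm_map]

lemma γ_lip (X Y : H) : ‖𝔖.γ X - 𝔖.γ Y‖ ≤ ‖X - Y‖ := by
  have h1 := 𝔖.inner_le X Y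
  have e1 : ‖𝔖.γ X - 𝔖.γ Y‖^2 ≤ ‖X - Y‖^2 := by
    rw [norm_sub_sq_real, norm_sub_sq_real, 𝔖.norm_γ, 𝔖.norm_γ]; linarith
  nlinarith [norm_nonneg (𝔖.γ X - 𝔖.γ Y), norm_nonneg (X - Y)]

lemma τ_γ (X : H) : 𝔖.τ (𝔖.γ X) = 𝔖.γ X := by
  obtain ⟨a, ha⟩ := 𝔖.decomp X
  have h := congrArg 𝔖.γ ha
  rw [𝔖.γΛ] at h
  exact h.symm

lemma act_inv_apply (s : S) (x : 𝒳) : 𝔖.act s⁻¹ (𝔖.act s x) = x := by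
  have h : 𝔖.act s⁻¹ (𝔖.act s x) = (𝔖.act s⁻¹ * 𝔖.act s) x := rfl
  rw [h, ← map_mul, inv_mul_cancel, map_one]
  rfl

lemma τ_mem (D : Set 𝒳) (hDinv : ∀ (s : S), ∀ x ∈ D, 𝔖.act s x ∈ D)
    {x : 𝒳} (hx : x ∈ D) : 𝔖.τ x ∈ D := by
  obtain ⟨s, hs⟩ := 𝔖.τ_orbit x
  rw [hs]; exact hDinv s x hx

lemma γΛ_mem (D : Set 𝒳) (hDinv : ∀ (s : S), ∀ x ∈ D, 𝔖.act s x ∈ D)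
    {x : 𝒳} (hx : x ∈ D) (a : A) : 𝔖.Λ a x ∈ 𝔖.γ ⁻¹' D := by
  show 𝔖.γ (𝔖.Λ a x) ∈ D
  rw [𝔖.γΛ]; exact 𝔖.τ_mem D hDinv hx

lemma dist_γ_τ (Z : H) (a : A) (w : 𝒳) : ‖𝔖.γ Z - 𝔖.τ w‖ ≤ ‖Z - 𝔖.Λ a w‖ := by
  have h := 𝔖.γ_lip Z (𝔖.Λ a w)
  rwa [𝔖.γΛ] at h

end SDS


namespace SDS
variable {𝒳 H S A : Type*} [NormedAddCommGroup 𝒳] [InnerProductSpace ℝ 𝒳]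
    [NormedAddCommGroup H] [InnerProductSpace ℝ H] [Group S]
variable (𝔖 : SDS 𝒳 H S A)

lemma frechet_sup (D : Set 𝒳) (hDinv : ∀ (s : S), ∀ x ∈ D, 𝔖.act s x ∈ D)
    {x y : 𝒳} (hy : y ∈ fNormal D x) (a : A) :
    𝔖.Λ a y ∈ fNormal (𝔖.γ ⁻¹' D) (𝔖.Λ a x) := by
  obtain ⟨hxD, hfy⟩ := hy
  refine ⟨𝔖.γΛ_mem D hDinv hxD a, ?_⟩
  intro ε hε
  have hc : (0:ℝ) < ε + 2*‖y‖ := by positivity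
  obtain ⟨δ₀, hδ₀, hδ⟩ := hfy (min (ε/4) (ε^2/(8*(‖y‖+1)))) (by positivity)
  refine ⟨δ₀ * ε / (ε + 2*‖y‖), by positivity, ?_⟩
  intro Z hZ hZnear
  set X' := 𝔖.Λ a x with hX'
  rcases eq_or_lt_of_le (norm_nonneg (Z - X')) with h0 | h0
  · have hz0 : Z - X' = 0 := norm_eq_zero.mp h0.symm
    rw [hz0, inner_zero_left, norm_zero, mul_zero]
  · set r := ‖Z - X'‖ with hr
    obtain ⟨t, htpos, htε⟩ : ∃ t : ℝ, 0 < t ∧ t * ε = r :=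
      ⟨r/ε, div_pos h0 hε, div_mul_cancel₀ r hε.ne'⟩
    set w := x + t • y with hw
    obtain ⟨s, hs⟩ := 𝔖.τ_orbit w
    set z := 𝔖.act s⁻¹ (𝔖.γ Z) with hz
    have hzD : z ∈ D := hDinv s⁻¹ _ hZ
    have hΛw : 𝔖.Λ a w = X' + t • 𝔖.Λ a y := by
      rw [hw, map_add, map_smul]
    have e1 : z - w = 𝔖.act s⁻¹ (𝔖.γ Z - 𝔖.act s w) := by
      rw [map_sub, 𝔖.act_inv_apply]
    have key1 : ‖z - w‖ ≤ ‖Z - X' - t • 𝔖.Λ a y‖ := by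
      have h1 := 𝔖.dist_γ_τ Z a w
      rw [hΛw] at h1
      have h3 : ‖z - w‖ = ‖𝔖.γ Z - 𝔖.τ w‖ := by
        rw [e1, (𝔖.act s⁻¹).norm_map, hs]
      rw [h3, ← sub_sub] at *
      exact h1
    have sq1 : ‖Z - X' - t • 𝔖.Λ a y‖^2
        = r^2 - 2*(t*⟪Z - X', 𝔖.Λ a y⟫) + t^2*‖y‖^2 := by
      rw [norm_sub_sq_real, real_inner_smul_right, norm_smul]
      rw [(𝔖.Λ a).norm_map]
      rw [Real.norm_eq_abs, abs_of_pos htpos]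
      ring
    have sq2 : ‖z - w‖^2 = ‖z - x‖^2 - 2*(t*⟪z - x, y⟫) + t^2*‖y‖^2 := by
      have e : z - w = (z - x) - t • y := by rw [hw]; abel
      rw [e, norm_sub_sq_real, real_inner_smul_right, norm_smul,
        Real.norm_eq_abs, abs_of_pos htpos]
      ring
    have key2 : t * ⟪Z - X', 𝔖.Λ a y⟫ ≤ r^2/2 + t*⟪z - x, y⟫ := by
      have hsq : ‖z - w‖^2 ≤ ‖Z - X' - t • 𝔖.Λ a y‖^2 := by
        nlinarith [key1, norm_nonneg (z - w)]
      rw [sq1, sq2] at hsq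
      nlinarith [sq_nonneg ‖z - x‖]
    have hzx : ‖z - x‖ ≤ r + 2*t*‖y‖ := by
      have h1 : ‖z - x‖ ≤ ‖z - w‖ + t*‖y‖ := by
        have e : z - x = (z - w) + t • y := by rw [hw]; abel
        rw [e]
        have h := norm_add_le (z - w) (t • y)
        rwa [norm_smul, Real.norm_eq_abs, abs_of_pos htpos] at h
      have h2 : ‖Z - X' - t • 𝔖.Λ a y‖ ≤ r + t*‖y‖ := by
        have h := norm_sub_le (Z - X') (t • 𝔖.Λ a y)
        rwa [norm_smul, (𝔖.Λ a).norm_map, Real.norm_eq_abs, abs_of_pos htpos] at h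
      linarith [key1]
    have hzxδ : ‖z - x‖ < δ₀ := by
      have h2 : r * (ε + 2*‖y‖) < δ₀ * ε := (lt_div_iff₀ hc).mp hZnear
      have h3 : (r + 2*t*‖y‖) * ε = r*(ε + 2*‖y‖) := by
        linear_combination (2*‖y‖) * htε
      have h4 : (r + 2*t*‖y‖) * ε < δ₀ * ε := by rw [h3]; exact h2
      have h5 : r + 2*t*‖y‖ < δ₀ := lt_of_mul_lt_mul_right h4 hε.le
      linarith [hzx]
    have hip : ⟪z - x, y⟫ ≤ min (ε/4) (ε^2/(8*(‖y‖+1))) * ‖z - x‖ :=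
      hδ z hzD hzxδ
    have hε₀1 : min (ε/4) (ε^2/(8*(‖y‖+1))) ≤ ε/4 := min_le_left _ _
    have hε₀2 : min (ε/4) (ε^2/(8*(‖y‖+1))) ≤ ε^2/(8*(‖y‖+1)) := min_le_right _ _
    have hε₀pos : 0 < min (ε/4) (ε^2/(8*(‖y‖+1))) := by positivity
    set ε₀ := min (ε/4) (ε^2/(8*(‖y‖+1))) with hε₀
    clear_value ε₀
    have hynn : (0:ℝ) ≤ ‖y‖ := norm_nonneg y
    have hstep : t*⟪z - x, y⟫ ≤ t*ε₀*r + 2*t^2*ε₀*‖y‖ := by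
      have h1 : t*⟪z - x, y⟫ ≤ t*(ε₀*‖z - x‖) :=
        mul_le_mul_of_nonneg_left hip htpos.le
      have h2 : ε₀*‖z - x‖ ≤ ε₀*(r + 2*t*‖y‖) :=
        mul_le_mul_of_nonneg_left hzx hε₀pos.le
      have h4 : t*(ε₀*‖z - x‖) ≤ t*(ε₀*(r + 2*t*‖y‖)) :=
        mul_le_mul_of_nonneg_left h2 htpos.le
      have h3 : t*(ε₀*(r + 2*t*‖y‖)) = t*ε₀*r + 2*t^2*ε₀*‖y‖ := by ring
      linarith [h1, h4]
    have b1 : t*ε₀*r ≤ r^2/4 := by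
      have h1 : t*ε₀ ≤ r/4 := by
        calc t*ε₀ ≤ t*(ε/4) := mul_le_mul_of_nonneg_left hε₀1 htpos.le
          _ = r/4 := by rw [← htε]; ring
      calc t*ε₀*r ≤ (r/4)*r := mul_le_mul_of_nonneg_right h1 h0.le
        _ = r^2/4 := by ring
    have b2 : 2*t^2*ε₀*‖y‖ ≤ r^2/4 := by
      have htε2 : t^2*ε^2 = r^2 := by linear_combination (t*ε + r) * htε
      have h1 : ε₀*‖y‖ ≤ (ε^2/(8*(‖y‖+1)))*‖y‖ := mul_le_mul_of_nonneg_right hε₀2 hynn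
      have h2 : (ε^2/(8*(‖y‖+1)))*‖y‖ ≤ ε^2/8 := by
        rw [div_mul_eq_mul_div, div_le_div_iff₀ (by positivity) (by positivity)]
        nlinarith [sq_nonneg ε, hynn]
      have h3 : 2*t^2*(ε₀*‖y‖) ≤ 2*t^2*(ε^2/8) :=
        mul_le_mul_of_nonneg_left (h1.trans h2) (by positivity)
      calc 2*t^2*ε₀*‖y‖ = 2*t^2*(ε₀*‖y‖) := by ring
        _ ≤ 2*t^2*(ε^2/8) := h3
        _ = r^2/4 := by linear_combination (1/4) * htε2
    have hfin : t * ⟪Z - X', 𝔖.Λ a y⟫ ≤ t * (ε * r) := by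
      have e2 : t * (ε * r) = r^2 := by rw [← htε]; ring
      rw [e2]
      linarith [key2, hstep, b1, b2]
    exact le_of_mul_le_mul_left hfin htpos

end SDS


namespace SDS
variable {𝒳 H S A : Type*} [NormedAddCommGroup 𝒳] [InnerProductSpace ℝ 𝒳]
    [NormedAddCommGroup H] [InnerProductSpace ℝ H] [Group S]
variable (𝔖 : SDS 𝒳 H S A)

lemma lambdaSet_bounded : Bornology.IsBounded 𝔖.LambdaSet := by
  rw [isBounded_iff_forall_norm_le]
  exact ⟨1, by rintro L ⟨a, rfl⟩; exact (𝔖.Λ a).norm_toContinuousLinearMap_le⟩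

lemma apply_tendsto {Tn : ℕ → 𝒳 →L[ℝ] H} {T : 𝒳 →L[ℝ] H} {vn : ℕ → 𝒳} {v : 𝒳}
    (hT : Tendsto Tn atTop (𝓝 T)) (hv : Tendsto vn atTop (𝓝 v)) :
    Tendsto (fun n => Tn n (vn n)) atTop (𝓝 (T v)) :=
  (isBoundedBilinearMap_apply.continuous.tendsto (T, v)).comp (hT.prodMk_nhds hv)

lemma frechet_inf [FiniteDimensional ℝ 𝒳] [FiniteDimensional ℝ H]
    (hcl : IsClosed 𝔖.LambdaSet)
    (D : Set 𝒳) (hDinv : ∀ (s : S), ∀ x ∈ D, 𝔖.act s x ∈ D)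
    {X Y : H} (hY : Y ∈ fNormal (𝔖.γ ⁻¹' D) X) :
    ∃ a : A, X = 𝔖.Λ a (𝔖.γ X) ∧ ∃ y ∈ fNormal D (𝔖.γ X), Y = 𝔖.Λ a y := by
  haveI : FiniteDimensional ℝ (𝒳 →L[ℝ] H) :=
    FiniteDimensional.of_injective (ContinuousLinearMap.coeLM ℝ)
      (fun f g h => ContinuousLinearMap.coe_injective h)
  obtain ⟨hXD, hY2⟩ := hY
  -- Claim A
  have claimA : ∀ ε : ℝ, 0 < ε → ∃ t₀ > 0, ∀ t : ℝ, 0 < t → t ≤ t₀ →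
      ∃ b : A, X + t • Y = 𝔖.Λ b (𝔖.γ (X + t • Y)) ∧
        ‖𝔖.Λ b (𝔖.γ X) - X‖ ≤ ε * t := by
    intro ε hε
    obtain ⟨δ, hδpos, hδ⟩ := hY2 (ε/2) (by positivity)
    refine ⟨δ / (2*‖Y‖ + 2), by positivity, ?_⟩
    intro t ht ht0
    obtain ⟨b, hb⟩ := 𝔖.decomp (X + t • Y)
    refine ⟨b, hb, ?_⟩
    set Z := 𝔖.Λ b (𝔖.γ X) with hZdef
    have hZD : Z ∈ 𝔖.γ ⁻¹' D := by
      show 𝔖.γ Z ∈ D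
      rw [hZdef, 𝔖.γΛ, 𝔖.τ_γ]
      exact hXD
    have h2 : ⟪X + t • Y, X⟫ ≤ ⟪X + t • Y, Z⟫ := by
      have e1 : ⟪X + t • Y, Z⟫ = ⟪𝔖.γ (X + t • Y), 𝔖.γ X⟫ := by
        conv_lhs => rw [hb]
        rw [hZdef, (𝔖.Λ b).inner_map_map]
      rw [e1]
      exact 𝔖.inner_le _ _
    have h3 : ‖Z‖ = ‖X‖ := by rw [hZdef, (𝔖.Λ b).norm_map, 𝔖.norm_γ]
    have h4 : ‖Z - X‖^2 ≤ 2 * (t * ⟪Y, Z - X⟫) := by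
      have e2 : ‖Z - X‖^2 = ‖Z‖^2 - 2*⟪Z,X⟫ + ‖X‖^2 := norm_sub_sq_real Z X
      have e3 : ⟪X + t • Y, X⟫ = ⟪X,X⟫ + t*⟪Y,X⟫ := by
        rw [inner_add_left, real_inner_smul_left]
      have e4 : ⟪X + t • Y, Z⟫ = ⟪X,Z⟫ + t*⟪Y,Z⟫ := by
        rw [inner_add_left, real_inner_smul_left]
      have e5 : ⟪Y, Z - X⟫ = ⟪Y,Z⟫ - ⟪Y,X⟫ := inner_sub_right Y Z X
      have e6 : ⟪X,X⟫ = ‖X‖^2 := real_inner_self_eq_norm_sq X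
      have e7 : ⟪X,Z⟫ = ⟪Z,X⟫ := real_inner_comm Z X
      have e5' : t*⟪Y, Z - X⟫ = t*⟪Y,Z⟫ - t*⟪Y,X⟫ := by rw [e5]; ring
      rw [e3, e4] at h2
      rw [e2, h3]
      linarith
    -- ‖Z - X‖ ≤ 2 t ‖Y‖ < δ
    have h5 : ‖Z - X‖ ≤ 2*t*‖Y‖ := by
      have hcs : ⟪Y, Z - X⟫ ≤ ‖Y‖ * ‖Z - X‖ := real_inner_le_norm Y (Z - X)
      have hA : t * ⟪Y, Z - X⟫ ≤ t * (‖Y‖*‖Z - X‖) := mul_le_mul_of_nonneg_left hcs ht.le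
      nlinarith [norm_nonneg (Z - X), norm_nonneg Y, h4, hA,
        mul_nonneg ht.le (norm_nonneg Y)]
    have h6 : ‖Z - X‖ < δ := by
      have : 2*t*‖Y‖ < δ := by
        have h7 : t * (2*‖Y‖) ≤ (δ / (2*‖Y‖ + 2)) * (2*‖Y‖) :=
          mul_le_mul_of_nonneg_right ht0 (by positivity)
        have h8 : (δ / (2*‖Y‖ + 2)) * (2*‖Y‖) < δ := by
          rw [div_mul_eq_mul_div, div_lt_iff₀ (by positivity)]
          nlinarith [norm_nonneg Y, hδpos]
        calc 2*t*‖Y‖ = t*(2*‖Y‖) := by ring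
          _ ≤ _ := h7
          _ < δ := h8
      linarith
    have h9 : ⟪Z - X, Y⟫ ≤ (ε/2) * ‖Z - X‖ := hδ Z hZD h6
    -- conclude ‖Z - X‖ ≤ ε t
    have h10 : ⟪Z - X, Y⟫ = ⟪Y, Z - X⟫ := real_inner_comm Y (Z - X)
    rw [h10] at h9
    have hB : t*⟪Y, Z - X⟫ ≤ t*((ε/2)*‖Z - X‖) := mul_le_mul_of_nonneg_left h9 ht.le
    nlinarith [norm_nonneg (Z - X), h4, hB, mul_pos hε ht]
  -- build sequences
  have seq : ∀ n : ℕ, ∃ (t : ℝ) (b : A), 0 < t ∧ t ≤ 1/(n+1) ∧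
      X + t • Y = 𝔖.Λ b (𝔖.γ (X + t • Y)) ∧
      ‖𝔖.Λ b (𝔖.γ X) - X‖ ≤ (1/(n+1)) * t := by
    intro n
    obtain ⟨t₀, ht₀, hA⟩ := claimA (1/(n+1)) (by positivity)
    obtain ⟨b, hb1, hb2⟩ := hA (min t₀ (1/(n+1)))
      (lt_min ht₀ (by positivity)) (min_le_left _ _)
    exact ⟨min t₀ (1/(n+1)), b, lt_min ht₀ (by positivity), min_le_right _ _, hb1, hb2⟩
  choose tn bn htpos htle hdecomp hnear using seq
  set Ln : ℕ → 𝒳 →L[ℝ] H := fun n => (𝔖.Λ (bn n)).toContinuousLinearMap with hLn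
  have hLmem : ∀ n, Ln n ∈ 𝔖.LambdaSet := fun n => ⟨bn n, rfl⟩
  obtain ⟨L, hLmemcl, φ, hφ, hLconv⟩ :=
    tendsto_subseq_of_bounded 𝔖.lambdaSet_bounded hLmem
  rw [hcl.closure_eq] at hLmemcl
  obtain ⟨a, rfl⟩ := hLmemcl
  set wn : ℕ → 𝒳 := fun n => (tn n)⁻¹ • (𝔖.γ (X + tn n • Y) - 𝔖.γ X) with hwn
  have hwbdd : ∀ n, wn n ∈ closedBall (0:𝒳) ‖Y‖ := by
    intro n
    rw [mem_closedBall_zero_iff]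
    show ‖(tn n)⁻¹ • (𝔖.γ (X + tn n • Y) - 𝔖.γ X)‖ ≤ ‖Y‖
    rw [norm_smul, Real.norm_eq_abs, abs_of_pos (inv_pos.mpr (htpos n))]
    have h1 : ‖𝔖.γ (X + tn n • Y) - 𝔖.γ X‖ ≤ tn n * ‖Y‖ := by
      have h2 := 𝔖.γ_lip (X + tn n • Y) X
      rwa [add_sub_cancel_left, norm_smul, Real.norm_eq_abs,
        abs_of_pos (htpos n)] at h2
    calc (tn n)⁻¹ * ‖𝔖.γ (X + tn n • Y) - 𝔖.γ X‖ ≤ (tn n)⁻¹ * (tn n * ‖Y‖) :=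
          mul_le_mul_of_nonneg_left h1 (inv_pos.mpr (htpos n)).le
      _ = ‖Y‖ := inv_mul_cancel_left₀ (htpos n).ne' ‖Y‖
  obtain ⟨w, -, ψ, hψ, hwconv⟩ :=
    tendsto_subseq_of_bounded (isBounded_closedBall (x := (0:𝒳)) (r := ‖Y‖))
      (fun k => hwbdd (φ k))
  have hLconv2 : Tendsto (fun k => Ln (φ (ψ k))) atTop
      (𝓝 (𝔖.Λ a).toContinuousLinearMap) := hLconv.comp hψ.tendsto_atTop
  have hwconv2 : Tendsto (fun k => wn (φ (ψ k))) atTop (𝓝 w) := hwconv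
  have hge : ∀ k, k ≤ φ (ψ k) := fun k => (hφ.comp hψ).le_apply
  have hcast : ∀ k : ℕ, (0:ℝ) < (k:ℝ) + 1 := fun k => by positivity
  have hmono : ∀ k, (1:ℝ)/((φ (ψ k) : ℝ)+1) ≤ 1/((k:ℝ)+1) := by
    intro k
    apply one_div_le_one_div_of_le (hcast k)
    have h : ((k:ℝ)) ≤ ((φ (ψ k) : ℕ) : ℝ) := Nat.cast_le.mpr (hge k)
    linarith
  -- Λ a (γ X) = X
  have haX : 𝔖.Λ a (𝔖.γ X) = X := by
    have h1 : Tendsto (fun k => Ln (φ (ψ k)) (𝔖.γ X)) atTop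
        (𝓝 ((𝔖.Λ a).toContinuousLinearMap (𝔖.γ X))) :=
      apply_tendsto hLconv2 tendsto_const_nhds
    have hbound : ∀ k, ‖Ln (φ (ψ k)) (𝔖.γ X) - X‖ ≤ 1/((k:ℝ)+1) := by
      intro k
      set m := φ (ψ k) with hm
      have h2 : ‖𝔖.Λ (bn m) (𝔖.γ X) - X‖ ≤ (1/((m:ℝ)+1)) * tn m := hnear m
      have h3 : tn m ≤ 1 := by
        have := htle m
        have h4 : (1:ℝ)/((m:ℝ)+1) ≤ 1 := by
          rw [div_le_one (hcast m)]; linarith [(hcast m).le]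
        linarith
      have h5 : (1/((m:ℝ)+1)) * tn m ≤ 1/((m:ℝ)+1) := by
        have := mul_le_mul_of_nonneg_left h3 (le_of_lt (by positivity : (0:ℝ) < 1/((m:ℝ)+1)))
        simpa using this
      show ‖𝔖.Λ (bn m) (𝔖.γ X) - X‖ ≤ 1/((k:ℝ)+1)
      exact le_trans (le_trans h2 h5) (hmono k)
    have h6 : Tendsto (fun k => Ln (φ (ψ k)) (𝔖.γ X) - X) atTop (𝓝 0) := by
      apply squeeze_zero_norm hbound
      exact tendsto_one_div_add_atTop_nhds_zero_nat
    have h7 : Tendsto (fun k => Ln (φ (ψ k)) (𝔖.γ X)) atTop (𝓝 X) := by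
      have := h6.add_const X
      simpa using this
    have h8 := tendsto_nhds_unique h1 h7
    rwa [(𝔖.Λ a).coe_toContinuousLinearMap] at h8
  -- Y = Λ a w
  have hYw : Y = 𝔖.Λ a w := by
    have hdiff : ∀ n, ‖Y - Ln n (wn n)‖ ≤ 1/((n:ℝ)+1) := by
      intro n
      have ht := (htpos n).ne'
      have e : Ln n (wn n) = (tn n)⁻¹ • (𝔖.Λ (bn n) (𝔖.γ (X + tn n • Y)) - 𝔖.Λ (bn n) (𝔖.γ X)) := by
        show 𝔖.Λ (bn n) ((tn n)⁻¹ • (𝔖.γ (X + tn n • Y) - 𝔖.γ X)) = _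
        rw [map_smul, map_sub]
      rw [← hdecomp n] at e
      have e3 : (tn n)⁻¹ • (X + tn n • Y - 𝔖.Λ (bn n) (𝔖.γ X))
          = (tn n)⁻¹ • X + Y - (tn n)⁻¹ • 𝔖.Λ (bn n) (𝔖.γ X) := by
        rw [smul_sub, smul_add, inv_smul_smul₀ ht]
      have e2 : Y - Ln n (wn n) = (tn n)⁻¹ • (𝔖.Λ (bn n) (𝔖.γ X) - X) := by
        rw [e, e3, smul_sub]
        abel
      rw [e2, norm_smul, Real.norm_eq_abs, abs_of_pos (inv_pos.mpr (htpos n))]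
      calc (tn n)⁻¹ * ‖𝔖.Λ (bn n) (𝔖.γ X) - X‖
          ≤ (tn n)⁻¹ * ((1/((n:ℝ)+1)) * tn n) :=
            mul_le_mul_of_nonneg_left (hnear n) (inv_pos.mpr (htpos n)).le
        _ = 1/((n:ℝ)+1) := by
            rw [mul_comm ((1:ℝ)/((n:ℝ)+1)) (tn n), inv_mul_cancel_left₀ ht]
    have h1 : Tendsto (fun k => Ln (φ (ψ k)) (wn (φ (ψ k)))) atTop
        (𝓝 ((𝔖.Λ a).toContinuousLinearMap w)) := apply_tendsto hLconv2 hwconv2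
    have h2 : Tendsto (fun k => Y - Ln (φ (ψ k)) (wn (φ (ψ k)))) atTop (𝓝 0) := by
      apply squeeze_zero_norm (fun k => le_trans (hdiff (φ (ψ k))) (hmono k))
      exact tendsto_one_div_add_atTop_nhds_zero_nat
    have h3 : Tendsto (fun k => Ln (φ (ψ k)) (wn (φ (ψ k)))) atTop (𝓝 Y) := by
      have h4 := (h2.neg).add_const Y
      have h5 : (fun k => -(Y - Ln (φ (ψ k)) (wn (φ (ψ k)))) + Y)
          = fun k => Ln (φ (ψ k)) (wn (φ (ψ k))) := by
        funext k; abel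
      rw [h5] at h4
      simpa using h4
    have h6 := tendsto_nhds_unique h3 h1
    rwa [(𝔖.Λ a).coe_toContinuousLinearMap] at h6
  refine ⟨a, haX.symm, w, ⟨hXD, ?_⟩, hYw⟩
  intro ε hε
  obtain ⟨δ, hδpos, hδ⟩ := hY2 ε hε
  refine ⟨δ, hδpos, ?_⟩
  intro z hzD hznear
  have h1 : 𝔖.Λ a z ∈ 𝔖.γ ⁻¹' D := 𝔖.γΛ_mem D hDinv hzD a
  have h2 : 𝔖.Λ a z - X = 𝔖.Λ a (z - 𝔖.γ X) := by rw [map_sub, haX]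
  have h3 : ‖𝔖.Λ a z - X‖ = ‖z - 𝔖.γ X‖ := by rw [h2, (𝔖.Λ a).norm_map]
  have h4 := hδ (𝔖.Λ a z) h1 (by rw [h3]; exact hznear)
  rw [h3, h2, hYw] at h4
  rwa [(𝔖.Λ a).inner_map_map] at h4

end SDS


namespace SDS
variable {𝒳 H S A : Type*} [NormedAddCommGroup 𝒳] [InnerProductSpace ℝ 𝒳]
    [NormedAddCommGroup H] [InnerProductSpace ℝ H] [Group S]
variable (𝔖 : SDS 𝒳 H S A)

lemma γ_tendsto {u : ℕ → H} {x : H} (hu : Tendsto u atTop (𝓝 x)) :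
    Tendsto (fun n => 𝔖.γ (u n)) atTop (𝓝 (𝔖.γ x)) := by
  rw [tendsto_iff_dist_tendsto_zero] at hu ⊢
  apply squeeze_zero (fun n => dist_nonneg) _ hu
  intro n
  rw [dist_eq_norm, dist_eq_norm]
  exact 𝔖.γ_lip (u n) x

end SDS

/-- For a nonempty `S`-invariant `D ⊆ 𝒳` and `X ∈ H`:
`N_L(X; γ⁻¹(D)) = {Λ_a y : y ∈ N_L(γ(X); D), a ∈ A_X}`. -/
theorem limiting_normal_spectral_set
    [FiniteDimensional ℝ 𝒳] [FiniteDimensional ℝ H]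
    (𝔖 : SDS 𝒳 H S A) (hcl : IsClosed 𝔖.LambdaSet)
    (D : Set 𝒳) (hD : D.Nonempty) (hDinv : ∀ (s : S), ∀ x ∈ D, 𝔖.act s x ∈ D)
    (X : H) :
    lNormal (𝔖.γ ⁻¹' D) X = {Y | ∃ y ∈ lNormal D (𝔖.γ X), ∃ a ∈ 𝔖.AX X, Y = 𝔖.Λ a y} := by
  ext Y
  simp only [Set.mem_setOf_eq]
  constructor
  · rintro ⟨hX, Xn, Yn, hF, hXn, hYn⟩
    choose an hanX yn hyn hYeq using fun n => 𝔖.frechet_inf hcl D hDinv (hF n)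
    -- bound on yn
    obtain ⟨R, hR⟩ : ∃ R : ℝ, ∀ n, ‖yn n‖ ≤ R := by
      have hb : Bornology.IsBounded (Set.range Yn) := isBounded_range_of_tendsto Yn hYn
      obtain ⟨C, hC⟩ := isBounded_iff_forall_norm_le.mp hb
      refine ⟨C, fun n => ?_⟩
      have : ‖𝔖.Λ (an n) (yn n)‖ ≤ C := by
        rw [← hYeq n]; exact hC _ (Set.mem_range_self n)
      rwa [(𝔖.Λ (an n)).norm_map] at this
    set Ln : ℕ → 𝒳 →L[ℝ] H := fun n => (𝔖.Λ (an n)).toContinuousLinearMap with hLn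
    obtain ⟨L, hLmemcl, φ, hφ, hLconv⟩ :=
      tendsto_subseq_of_bounded 𝔖.lambdaSet_bounded (fun n => (⟨an n, rfl⟩ : Ln n ∈ 𝔖.LambdaSet))
    rw [hcl.closure_eq] at hLmemcl
    obtain ⟨a, rfl⟩ := hLmemcl
    obtain ⟨y, -, ψ, hψ, hyconv⟩ :=
      tendsto_subseq_of_bounded (isBounded_closedBall (x := (0:𝒳)) (r := R))
        (fun k => mem_closedBall_zero_iff.mpr (hR (φ k)))
    have hLconv2 : Tendsto (fun k => Ln (φ (ψ k))) atTop
        (𝓝 (𝔖.Λ a).toContinuousLinearMap) := hLconv.comp hψ.tendsto_atTop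
    have hyconv2 : Tendsto (fun k => yn (φ (ψ k))) atTop (𝓝 y) := hyconv
    have hXconv2 : Tendsto (fun k => Xn (φ (ψ k))) atTop (𝓝 X) :=
      hXn.comp (hφ.comp hψ).tendsto_atTop
    have hYconv2 : Tendsto (fun k => Yn (φ (ψ k))) atTop (𝓝 Y) :=
      hYn.comp (hφ.comp hψ).tendsto_atTop
    have hγXconv : Tendsto (fun k => 𝔖.γ (Xn (φ (ψ k)))) atTop (𝓝 (𝔖.γ X)) :=
      𝔖.γ_tendsto hXconv2
    -- a ∈ AX X
    have haAX : X = 𝔖.Λ a (𝔖.γ X) := by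
      have h1 : Tendsto (fun k => Ln (φ (ψ k)) (𝔖.γ (Xn (φ (ψ k))))) atTop
          (𝓝 ((𝔖.Λ a).toContinuousLinearMap (𝔖.γ X))) :=
        SDS.apply_tendsto hLconv2 hγXconv
      have h2 : (fun k => Ln (φ (ψ k)) (𝔖.γ (Xn (φ (ψ k))))) = fun k => Xn (φ (ψ k)) := by
        funext k
        show 𝔖.Λ (an (φ (ψ k))) (𝔖.γ (Xn (φ (ψ k)))) = Xn (φ (ψ k))
        exact (hanX (φ (ψ k))).symm
      rw [h2] at h1
      have h3 := tendsto_nhds_unique h1 hXconv2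
      rw [(𝔖.Λ a).coe_toContinuousLinearMap] at h3
      exact h3.symm
    -- Y = Λ a y
    have hYay : Y = 𝔖.Λ a y := by
      have h1 : Tendsto (fun k => Ln (φ (ψ k)) (yn (φ (ψ k)))) atTop
          (𝓝 ((𝔖.Λ a).toContinuousLinearMap y)) := SDS.apply_tendsto hLconv2 hyconv2
      have h2 : (fun k => Ln (φ (ψ k)) (yn (φ (ψ k)))) = fun k => Yn (φ (ψ k)) := by
        funext k
        show 𝔖.Λ (an (φ (ψ k))) (yn (φ (ψ k))) = Yn (φ (ψ k))
        exact (hYeq (φ (ψ k))).symm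
      rw [h2] at h1
      have h3 := tendsto_nhds_unique h1 hYconv2
      rw [(𝔖.Λ a).coe_toContinuousLinearMap] at h3
      exact h3.symm
    exact ⟨y, ⟨hX, fun k => 𝔖.γ (Xn (φ (ψ k))), fun k => yn (φ (ψ k)),
      fun k => hyn (φ (ψ k)), hγXconv, hyconv2⟩, a, haAX, hYay⟩
  · rintro ⟨y, ⟨hγXD, xn, yn, hfn, hxconv, hyconv⟩, a, haAX, rfl⟩
    have haAX' : X = 𝔖.Λ a (𝔖.γ X) := haAX
    refine ⟨hγXD, fun n => 𝔖.Λ a (xn n), fun n => 𝔖.Λ a (yn n),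
      fun n => 𝔖.frechet_sup D hDinv (hfn n) a, ?_, ?_⟩
    · have h1 : Tendsto (fun n => 𝔖.Λ a (xn n)) atTop (𝓝 (𝔖.Λ a (𝔖.γ X))) :=
        ((𝔖.Λ a).continuous.tendsto _).comp hxconv
      rwa [← haAX'] at h1
    · exact ((𝔖.Λ a).continuous.tendsto _).comp hyconv
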